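/- Let f : ℕ → ℕ. Suppose that for every domain X' and every binary concept class H ⊆ {0,1}^{X'} with finite VC dimension d, there exists an exact realizable sample compression scheme for H of size at most f(d). Then for every multiclass concept class C ⊆ Y^X with finite label set Y (|Y| ≥ 2) and finite graph dimension d_G, there exists an exact agnostic sample compression scheme for C (for the zero-one loss) of size at most f(d_G)·(1 + ⌈log₂ |Y|⌉). -/

import Mathlib

universe u v

/-- A finite sample `S` is realizable by the concept class `C`. -/
def Realizable {X Y : Type*} (C : Set (X → Y)) (S : List (X × Y)) : Prop :=
  ∃ c ∈ C, ∀ p ∈ S, c p.1 = p.2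

/-- `(κ, ρ)` is an exact realizable sample compression scheme for `C` of size at most `k`. -/
def IsExactRealizableScheme {X Y : Type*} (C : Set (X → Y)) (k : ℕ)
    (κ : List (X × Y) → List (X × Y) × List Bool)
    (ρ : List (X × Y) × List Bool → X → Y) : Prop :=
  (∀ S : List (X × Y), (κ S).1 ⊆ S) ∧
  (∀ S : List (X × Y), Realizable C S → (κ S).1.length + (κ S).2.length ≤ k) ∧
  (∀ S : List (X × Y), Realizable C S → ∀ p ∈ S, ρ (κ S) p.1 = p.2)

open Classical in
/-- The number of mistakes (zero-one loss count) of a predictor `g` on a sample `S`. -/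
noncomputable def errCount {X Y : Type*} (g : X → Y) (S : List (X × Y)) : ℕ :=
  S.countP fun p => decide (g p.1 ≠ p.2)

/-- `(κ, ρ)` is an exact agnostic sample compression scheme for `C` (zero-one loss) of
size at most `k`: on every finite sample, the reconstruction makes at most as many
mistakes as any concept of `C`. -/
def IsExactAgnosticScheme {X Y : Type*} (C : Set (X → Y)) (k : ℕ)
    (κ : List (X × Y) → List (X × Y) × List Bool)
    (ρ : List (X × Y) × List Bool → X → Y) : Prop :=
  (∀ S : List (X × Y), (κ S).1 ⊆ S) ∧
  (∀ S : List (X × Y), (κ S).1.length + (κ S).2.length ≤ k) ∧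
  (∀ S : List (X × Y), ∀ c ∈ C, errCount (ρ (κ S)) S ≤ errCount c S)

/-- `n` points of `X` are shattered by the binary concept class `H ⊆ {0,1}^X`. -/
def ShattersN {X : Type*} (H : Set (X → Bool)) (n : ℕ) : Prop :=
  ∃ x : Fin n → X, ∀ b : Fin n → Bool, ∃ h ∈ H, ∀ i, h (x i) = b i

/-- `H` has (finite) VC dimension exactly `d`. -/
def IsVCDim {X : Type*} (H : Set (X → Bool)) (d : ℕ) : Prop :=
  ShattersN H d ∧ ¬ ShattersN H (d + 1)

/-- `n` points of `X` are G-shattered by the multiclass concept class `C ⊆ Y^X`. -/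
def GShattersN {X Y : Type*} (C : Set (X → Y)) (n : ℕ) : Prop :=
  ∃ (x : Fin n → X) (y : Fin n → Y),
    ∀ b : Fin n → Bool, ∃ c ∈ C, ∀ i, (c (x i) = y i ↔ b i = true)

/-- `C` has (finite) graph dimension exactly `d`. -/
def IsGraphDim {X Y : Type*} (C : Set (X → Y)) (d : ℕ) : Prop :=
  GShattersN C d ∧ ¬ GShattersN C (d + 1)

noncomputable section MulticlassAux

/-- Parse a compressed multiclass representation back into a binary compressed pair. -/
def mcParse {X Y : Type*} [DecidableEq Y] (m : ℕ) (dec : List Bool → Y) :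
    List (X × Y) → List Bool → List ((X × Y) × Bool) × List Bool
  | [], bits => ([], bits)
  | p :: L, bits =>
      (((p.1, dec (List.take m bits)), decide (dec (List.take m bits) = p.2)) ::
        (mcParse m dec L (List.drop m bits)).1,
       (mcParse m dec L (List.drop m bits)).2)

theorem mcParse_spec {X Y : Type*} [DecidableEq Y] (m : ℕ) (enc : Y → List Bool)
    (dec : List Bool → Y)
    (hlen : ∀ y, (enc y).length = m) (hdec : ∀ y, dec (enc y) = y)
    (fp : (X × Y) × Bool → X × Y) (fy : (X × Y) × Bool → Y)
    (L : List ((X × Y) × Bool))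
    (hq : ∀ q ∈ L, q = (((fp q).1, fy q), decide (fy q = (fp q).2)))
    (bits : List Bool) :
    mcParse m dec (L.map fp) ((L.map fun q => enc (fy q)).flatten ++ bits) = (L, bits) := by
  induction L with
  | nil => simp [mcParse]
  | cons q L ih =>
    have hq1 := hq q List.mem_cons_self
    simp only [List.map_cons, List.flatten_cons, List.append_assoc, mcParse,
      List.take_left' (hlen (fy q)), List.drop_left' (hlen (fy q)), hdec,
      ih (fun r hr => hq r (List.mem_cons_of_mem q hr))]
    rw [← hq1]

end MulticlassAux

/-- Reducing agnostic multiclass compression to binary compression: if every binary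
class of finite VC dimension `d` has an exact realizable compression scheme of size at
most `f d`, then every multiclass class with finite label set `Y` (`|Y| ≥ 2`) and finite
graph dimension `d_G` has an exact agnostic compression scheme (zero-one loss) of size
at most `f d_G * (1 + ⌈log₂ |Y|⌉)`. -/
theorem multiclass_agnostic_compression_of_binary {X : Type u} {Y : Type v} [Fintype Y]
    (hY : 2 ≤ Fintype.card Y) (f : ℕ → ℕ)
    (hbin : ∀ (X' : Type (max u v)) (H : Set (X' → Bool)) (d : ℕ), IsVCDim H d →
      ∃ κ ρ, IsExactRealizableScheme H (f d) κ ρ)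
    (C : Set (X → Y)) (dG : ℕ) (hC : IsGraphDim C dG) :
    ∃ κ ρ, IsExactAgnosticScheme C (f dG * (1 + Nat.clog 2 (Fintype.card Y))) κ ρ := by
  classical
  letI : DecidableEq Y := Classical.decEq Y
  have hYpos : 0 < Fintype.card Y := by omega
  have hNY : Nonempty Y := Fintype.card_pos_iff.mp hYpos
  set m : ℕ := Nat.clog 2 (Fintype.card Y) with hm
  obtain ⟨e⟩ : Nonempty (Y ↪ (Fin m → Bool)) := by
    rw [Function.Embedding.nonempty_iff_card_le]
    calc Fintype.card Y ≤ 2 ^ m := Nat.le_pow_clog (by norm_num) _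
    _ = Fintype.card (Fin m → Bool) := by simp [Fintype.card_fun]
  set enc : Y → List Bool := fun y => List.ofFn (e y) with henc
  have hencinj : Function.Injective enc := fun a b hab => e.injective (List.ofFn_injective hab)
  set dec : List Bool → Y := Function.invFun enc with hdecdef
  have hdec : ∀ y, dec (enc y) = y := Function.leftInverse_invFun hencinj
  have hlen : ∀ y, (enc y).length = m := fun y => by simp [henc]
  -- the binary graph class
  set H : Set ((X × Y) → Bool) := (fun c => fun xy : X × Y => decide (c xy.1 = xy.2)) '' C with hH
  have hshat : ∀ n, ShattersN H n ↔ GShattersN C n := by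
    intro n
    constructor
    · rintro ⟨x, hx⟩
      refine ⟨fun i => (x i).1, fun i => (x i).2, fun b => ?_⟩
      obtain ⟨h, ⟨c, hcC, rfl⟩, hhb⟩ := hx b
      refine ⟨c, hcC, fun i => ?_⟩
      rw [← hhb i]
      simp
    · rintro ⟨x, y, hxy⟩
      refine ⟨fun i => (x i, y i), fun b => ?_⟩
      obtain ⟨c, hcC, hc2⟩ := hxy b
      refine ⟨_, ⟨c, hcC, rfl⟩, fun i => ?_⟩
      have h2 := hc2 i
      cases hb : b i <;> simp [hb] at h2 <;> simp [h2]
  have hHVC : IsVCDim H dG := ⟨(hshat dG).mpr hC.1, fun h => hC.2 ((hshat _).mp h)⟩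
  obtain ⟨κ₀, ρ₀, hsub₀, hsize₀, hcor₀⟩ := hbin (X × Y) H dG hHVC
  -- empirical risk minimizer
  have hminex : ∀ S : List (X × Y), ∃ c, c ∈ C ∧ ∀ c' ∈ C, errCount c S ≤ errCount c' S := by
    intro S
    obtain ⟨c₀, hc₀⟩ : C.Nonempty := by
      obtain ⟨x, y, hb⟩ := hC.1
      obtain ⟨c, hcC, -⟩ := hb fun _ => true
      exact ⟨c, hcC⟩
    have hne : ((fun c => errCount c S) '' C).Nonempty := ⟨_, ⟨c₀, hc₀, rfl⟩⟩
    obtain ⟨c, hcC, hcv⟩ := Nat.sInf_mem hne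
    refine ⟨c, hcC, fun c' hc' => ?_⟩
    have : errCount c S = sInf ((fun c => errCount c S) '' C) := hcv
    rw [this]
    exact Nat.sInf_le ⟨c', hc', rfl⟩
  choose cs hcsC hcsMin using hminex
  -- binary sample associated to a multiclass sample
  set SI : List (X × Y) → List (X × Y) := fun S => S.filter fun p => decide (cs S p.1 = p.2)
    with hSI
  set ys : List Y := (Finset.univ : Finset Y).toList with hys
  set T : List (X × Y) → List ((X × Y) × Bool) :=
    fun S => (SI S).flatMap fun p => ys.map fun y => ((p.1, y), decide (y = p.2)) with hT
  set P : List (X × Y) → ((X × Y) × Bool) → Prop :=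
    fun S q => ∃ r : (X × Y) × Y, r.1 ∈ S ∧ q = ((r.1.1, r.2), decide (r.2 = r.1.2)) with hP
  set pick : List (X × Y) → ((X × Y) × Bool) → (X × Y) × Y :=
    fun S q => if h : P S q then h.choose else (q.1, q.1.2) with hpick
  have hpick_spec : ∀ S q, P S q → (pick S q).1 ∈ S ∧
      q = (((pick S q).1.1, (pick S q).2), decide ((pick S q).2 = (pick S q).1.2)) := by
    intro S q h
    simp only [hpick, dif_pos h]
    exact h.choose_spec
  have hTP : ∀ S q, q ∈ T S → P S q := by
    intro S q hq
    simp only [hT, List.mem_flatMap, List.mem_map] at hq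
    obtain ⟨p, hp, y, hy, rfl⟩ := hq
    have hpS : p ∈ S := by
      have hp' : p ∈ S ∧ cs S p.1 = p.2 := by simpa [hSI, List.mem_filter] using hp
      exact hp'.1
    exact ⟨(p, y), hpS, rfl⟩
  have hTreal : ∀ S, Realizable H (T S) := by
    intro S
    refine ⟨fun xy => decide (cs S xy.1 = xy.2), ⟨cs S, hcsC S, rfl⟩, ?_⟩
    intro q hq
    simp only [hT, List.mem_flatMap, List.mem_map] at hq
    obtain ⟨p, hp, y, hy, rfl⟩ := hq
    have hcp : cs S p.1 = p.2 := by
      have hp' : p ∈ S ∧ cs S p.1 = p.2 := by simpa [hSI, List.mem_filter] using hp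
      exact hp'.2
    show decide (cs S p.1 = y) = decide (y = p.2)
    rw [hcp]
    exact decide_eq_decide.mpr eq_comm
  -- the multiclass scheme
  set κ : List (X × Y) → List (X × Y) × List Bool := fun S =>
    ((κ₀ (T S)).1.map fun q => (pick S q).1,
     ((κ₀ (T S)).1.map fun q => enc (pick S q).2).flatten ++ (κ₀ (T S)).2) with hκ
  set ρ : List (X × Y) × List Bool → X → Y := fun Lb x =>
    if hx : ∃ y, ρ₀ (mcParse m dec Lb.1 Lb.2) (x, y) = true then hx.choose
    else Classical.choice hNY with hρ
  refine ⟨κ, ρ, ?_, ?_, ?_⟩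
  · -- subset
    intro S p hp
    simp only [hκ, List.mem_map] at hp
    obtain ⟨q, hq, rfl⟩ := hp
    exact (hpick_spec S q (hTP S q (hsub₀ (T S) hq))).1
  · -- size
    intro S
    have hb := hsize₀ (T S) (hTreal S)
    have hflat : ∀ (l : List ((X × Y) × Bool)),
        ((l.map fun q => enc (pick S q).2).flatten).length = l.length * m := by
      intro l
      induction l with
      | nil => simp
      | cons a l ih =>
        simp only [List.map_cons, List.flatten_cons, List.length_append, hlen, ih,
          List.length_cons, Nat.succ_mul]
        omega
    show ((κ₀ (T S)).1.map fun q => (pick S q).1).length +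
        (((κ₀ (T S)).1.map fun q => enc (pick S q).2).flatten ++ (κ₀ (T S)).2).length ≤ _
    rw [List.length_append, hflat, List.length_map]
    have h1 : (κ₀ (T S)).1.length + ((κ₀ (T S)).1.length * m + (κ₀ (T S)).2.length) ≤
        ((κ₀ (T S)).1.length + (κ₀ (T S)).2.length) * (1 + m) := by
      have := Nat.le_add_right ((κ₀ (T S)).2.length) ((κ₀ (T S)).2.length * m)
      nlinarith [Nat.zero_le ((κ₀ (T S)).2.length * m)]
    refine le_trans h1 ?_
    exact Nat.mul_le_mul_right _ hb
  · -- agnostic correctness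
    intro S c hcC'
    have hspec : ∀ q ∈ (κ₀ (T S)).1,
        q = (((pick S q).1.1, (pick S q).2), decide ((pick S q).2 = (pick S q).1.2)) :=
      fun q hq => (hpick_spec S q (hTP S q (hsub₀ (T S) hq))).2
    have hparse : mcParse m dec (κ S).1 (κ S).2 = κ₀ (T S) := by
      have h := mcParse_spec m enc dec hlen hdec (fun q => (pick S q).1)
        (fun q => (pick S q).2) (κ₀ (T S)).1 hspec (κ₀ (T S)).2
      exact h
    have hcor := hcor₀ (T S) (hTreal S)
    have key : ∀ p ∈ S, cs S p.1 = p.2 → ρ (κ S) p.1 = p.2 := by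
      intro p hpS hcp
      have hmemT : ∀ y : Y, ((p.1, y), decide (y = p.2)) ∈ T S := by
        intro y
        have h2 : p ∈ SI S := by
          simp only [hSI, List.mem_filter]
          exact ⟨hpS, by simp [hcp]⟩
        have h1 : ((p.1, y), decide (y = p.2)) ∈ ys.map fun y' => ((p.1, y'), decide (y' = p.2)) :=
          List.mem_map.mpr ⟨y, by simp [hys], rfl⟩
        simp only [hT, List.mem_flatMap]
        exact ⟨p, h2, h1⟩
      have hval : ∀ y : Y, ρ₀ (κ₀ (T S)) (p.1, y) = decide (y = p.2) :=
        fun y => hcor _ (hmemT y)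
      show (if hx : ∃ y, ρ₀ (mcParse m dec (κ S).1 (κ S).2) (p.1, y) = true then hx.choose
        else Classical.choice hNY) = p.2
      simp only [hparse]
      have hex : ∃ y, ρ₀ (κ₀ (T S)) (p.1, y) = true := ⟨p.2, by rw [hval p.2]; simp⟩
      rw [dif_pos hex]
      have hcs := hex.choose_spec
      rw [hval hex.choose] at hcs
      exact of_decide_eq_true hcs
    have hmono : errCount (ρ (κ S)) S ≤ errCount (cs S) S := by
      unfold errCount
      apply List.countP_mono_left
      intro p hpS hne
      simp only [decide_eq_true_eq] at hne ⊢
      intro hcp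
      exact hne (key p hpS hcp)
    exact le_trans hmono (hcsMin S c hcC')
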